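/- Let m, n be positive integers with m < n. Then the limit as ε → 0 of the contour integral (1/(2πi)) ∮_{|z|=ε} (m z^{m-1})/(z^m - z̄^n) dz equals m, and the limit of (1/(2πi)) ∮_{|z|=ε} (-n z̄^{n-1})/(z^m - z̄^n) dz̄ equals 0. -/

import Mathlib

open Complex Filter

/-- The contour integral `∮_{|z-c|=R} f(z) dz̄`, defined analogously to `circleIntegral`
but against the conjugate differential `dz̄`. -/
noncomputable def circleIntegralConj (f : ℂ → ℂ) (c : ℂ) (R : ℝ) : ℂ :=
  ∫ θ in (0:ℝ)..(2 * Real.pi),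
    (starRingEnd ℂ) (deriv (circleMap c R) θ) * f (circleMap c R θ)


lemma aux_vnorm {m n : ℕ} (hmn : m < n) {ε : ℝ} (hε : 0 < ε) (hε1 : ε < 1) (θ : ℝ) :
    ‖(starRingEnd ℂ) (circleMap 0 ε θ) ^ n / circleMap 0 ε θ ^ m‖ ≤ ε := by
  have habs : ‖circleMap 0 ε θ‖ = ε := by
    rw [norm_circleMap_zero, abs_of_pos hε]
  have hc : ‖(starRingEnd ℂ) (circleMap 0 ε θ)‖ = ε := by
    rw [RCLike.norm_conj, habs]
  rw [norm_div, norm_pow, norm_pow, hc, habs, div_eq_mul_inv, ← pow_sub₀ ε hε.ne' hmn.le]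
  calc ε ^ (n - m) ≤ ε ^ 1 := pow_le_pow_of_le_one hε.le hε1.le (by omega)
    _ = ε := pow_one ε

lemma aux_denom {m n : ℕ} (hmn : m < n) {ε : ℝ} (hε : 0 < ε) (hε1 : ε < 1) (θ : ℝ) :
    circleMap 0 ε θ ^ m - (starRingEnd ℂ) (circleMap 0 ε θ) ^ n ≠ 0 := by
  intro h
  have habs : ‖circleMap 0 ε θ‖ = ε := by
    rw [norm_circleMap_zero, abs_of_pos hε]
  have hc : ‖(starRingEnd ℂ) (circleMap 0 ε θ)‖ = ε := by
    rw [RCLike.norm_conj, habs]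
  have h1 : ‖circleMap 0 ε θ ^ m‖ = ε ^ m := by rw [norm_pow, habs]
  have h2 : ‖(starRingEnd ℂ) (circleMap 0 ε θ) ^ n‖ = ε ^ n := by rw [norm_pow, hc]
  have heq : ε ^ m = ε ^ n := by rw [← h1, ← h2, sub_eq_zero.mp h]
  have hlt : ε ^ n < ε ^ m := pow_lt_pow_right_of_lt_one₀ hε hε1 hmn
  linarith

lemma aux_id1 {m : ℕ} (hm : 0 < m) {z w : ℂ} (hz : z ≠ 0) (hd : z ^ m - w ≠ 0) :
    z * I * ((m : ℂ) * z ^ (m - 1) / (z ^ m - w)) =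
      I * m + I * m * ((w / z ^ m) / (1 - w / z ^ m)) := by
  obtain ⟨k, rfl⟩ : ∃ k, m = k + 1 := ⟨m - 1, by omega⟩
  have h1 : (1 : ℂ) - w / z ^ (k + 1) = (z ^ (k + 1) - w) / z ^ (k + 1) := by
    field_simp
  rw [h1]
  simp only [Nat.add_sub_cancel]
  field_simp
  ring

lemma aux_id2 {n m : ℕ} (hn : 0 < n) {z : ℂ} (hz : z ≠ 0)
    (hd : z ^ m - (starRingEnd ℂ) z ^ n ≠ 0) :
    (starRingEnd ℂ) (z * I) *
        (-(n : ℂ) * (starRingEnd ℂ) z ^ (n - 1) / (z ^ m - (starRingEnd ℂ) z ^ n)) =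
      I * n * (((starRingEnd ℂ) z ^ n / z ^ m) / (1 - (starRingEnd ℂ) z ^ n / z ^ m)) := by
  set w := (starRingEnd ℂ) z with hw
  have hzm : z ^ m ≠ 0 := pow_ne_zero _ hz
  have h1 : (1 : ℂ) - w ^ n / z ^ m = (z ^ m - w ^ n) / z ^ m := by field_simp
  rw [h1, map_mul, conj_I, ← hw]
  obtain ⟨k, rfl⟩ : ∃ k, n = k + 1 := ⟨n - 1, by omega⟩
  simp only [Nat.add_sub_cancel]
  field_simp
  ring

lemma aux_bound {v : ℂ} (h : ‖v‖ ≤ 1 / 2) : ‖v / (1 - v)‖ ≤ 2 * ‖v‖ := by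
  have h1 : (1 : ℝ) / 2 ≤ ‖(1 : ℂ) - v‖ := by
    have := norm_sub_norm_le (1 : ℂ) v
    rw [norm_one] at this
    linarith
  rw [norm_div, div_le_iff₀ (by linarith)]
  nlinarith [norm_nonneg v]

lemma aux_norm_coeff : ‖1 / (2 * (Real.pi : ℂ) * I)‖ = 1 / (2 * Real.pi) := by
  rw [norm_div, norm_one, norm_mul, norm_mul, Complex.norm_real, norm_I,
    Complex.norm_ofNat, Real.norm_eq_abs, abs_of_pos Real.pi_pos, mul_one]

lemma est1 (m n : ℕ) (hm : 0 < m) (hmn : m < n) {ε : ℝ} (hε : 0 < ε) (hε2 : ε < 1 / 2) :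
    ‖(1 / (2 * Real.pi * I)) *
        (∮ z in C(0, ε), ((m : ℂ) * z ^ (m - 1)) / (z ^ m - (starRingEnd ℂ) z ^ n)) - m‖
      ≤ 2 * m * ε := by
  have hε1 : ε < 1 := by linarith
  set v : ℝ → ℂ := fun θ =>
    (starRingEnd ℂ) (circleMap 0 ε θ) ^ n / circleMap 0 ε θ ^ m with hv
  have hvb : ∀ θ, ‖v θ‖ ≤ ε := fun θ => aux_vnorm hmn hε hε1 θ
  have hvb' : ∀ θ, ‖v θ‖ ≤ 1 / 2 := fun θ => le_trans (hvb θ) hε2.le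
  have h1v : ∀ θ, 1 - v θ ≠ 0 := by
    intro θ h
    have := hvb' θ
    rw [sub_eq_zero] at h
    rw [← h, norm_one] at this
    linarith
  have hkey : ∀ θ : ℝ,
      deriv (circleMap 0 ε) θ •
        (((m : ℂ) * circleMap 0 ε θ ^ (m - 1)) /
          (circleMap 0 ε θ ^ m - (starRingEnd ℂ) (circleMap 0 ε θ) ^ n)) =
      I * m + I * m * (v θ / (1 - v θ)) := by
    intro θ
    rw [deriv_circleMap, smul_eq_mul]
    exact aux_id1 hm (circleMap_ne_center hε.ne') (aux_denom hmn hε hε1 θ)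
  have hvc : Continuous v := by
    apply Continuous.div
    · exact (Complex.continuous_conj.comp (continuous_circleMap 0 ε)).pow n
    · exact (continuous_circleMap 0 ε).pow m
    · exact fun θ => pow_ne_zero _ (circleMap_ne_center hε.ne')
  have hInt : IntervalIntegrable (fun θ => I * (m : ℂ) * (v θ / (1 - v θ)))
      MeasureTheory.volume 0 (2 * Real.pi) := by
    apply Continuous.intervalIntegrable
    exact continuous_const.mul (hvc.div (continuous_const.sub hvc) h1v)
  have hIntegral : (∮ z in C(0, ε),
      ((m : ℂ) * z ^ (m - 1)) / (z ^ m - (starRingEnd ℂ) z ^ n)) =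
      (2 * Real.pi : ℝ) • (I * m) +
        ∫ θ in (0:ℝ)..(2 * Real.pi), I * (m : ℂ) * (v θ / (1 - v θ)) := by
    rw [circleIntegral]
    simp only [hkey]
    rw [intervalIntegral.integral_add intervalIntegrable_const hInt,
      intervalIntegral.integral_const, sub_zero]
  rw [hIntegral]
  have hπ : (Real.pi : ℂ) ≠ 0 := ofReal_ne_zero.mpr Real.pi_ne_zero
  have hsimp : (1 / (2 * (Real.pi : ℂ) * I)) *
      ((2 * Real.pi : ℝ) • (I * m) +
        ∫ θ in (0:ℝ)..(2 * Real.pi), I * (m : ℂ) * (v θ / (1 - v θ))) - m =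
      (1 / (2 * (Real.pi : ℂ) * I)) *
        ∫ θ in (0:ℝ)..(2 * Real.pi), I * (m : ℂ) * (v θ / (1 - v θ)) := by
    rw [real_smul]
    push_cast
    field_simp
    ring
  rw [hsimp, norm_mul, aux_norm_coeff]
  have hbnd : ‖∫ θ in (0:ℝ)..(2 * Real.pi), I * (m : ℂ) * (v θ / (1 - v θ))‖ ≤
      (2 * m * ε) * |2 * Real.pi - 0| := by
    apply intervalIntegral.norm_integral_le_of_norm_le_const
    intro θ _
    rw [norm_mul, norm_mul, norm_I, one_mul, Complex.norm_natCast]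
    calc (m : ℝ) * ‖v θ / (1 - v θ)‖ ≤ (m : ℝ) * (2 * ‖v θ‖) := by
          exact mul_le_mul_of_nonneg_left (aux_bound (hvb' θ)) (Nat.cast_nonneg m)
      _ ≤ (m : ℝ) * (2 * ε) := by
          have := hvb θ
          nlinarith [Nat.cast_nonneg (α := ℝ) m]
      _ = 2 * m * ε := by ring
  rw [sub_zero, abs_of_pos (by positivity : (0:ℝ) < 2 * Real.pi)] at hbnd
  calc 1 / (2 * Real.pi) * ‖∫ θ in (0:ℝ)..(2 * Real.pi), I * (m : ℂ) * (v θ / (1 - v θ))‖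
      ≤ 1 / (2 * Real.pi) * ((2 * m * ε) * (2 * Real.pi)) := by
        apply mul_le_mul_of_nonneg_left hbnd (by positivity)
    _ = 2 * m * ε := by field_simp

lemma est2 (m n : ℕ) (hm : 0 < m) (hmn : m < n) {ε : ℝ} (hε : 0 < ε) (hε2 : ε < 1 / 2) :
    ‖(1 / (2 * Real.pi * I)) *
        circleIntegralConj
          (fun z => (-(n : ℂ) * (starRingEnd ℂ) z ^ (n - 1)) /
            (z ^ m - (starRingEnd ℂ) z ^ n)) 0 ε‖ ≤ 2 * n * ε := by
  have hε1 : ε < 1 := by linarith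
  set v : ℝ → ℂ := fun θ =>
    (starRingEnd ℂ) (circleMap 0 ε θ) ^ n / circleMap 0 ε θ ^ m with hv
  have hvb : ∀ θ, ‖v θ‖ ≤ ε := fun θ => aux_vnorm hmn hε hε1 θ
  have hvb' : ∀ θ, ‖v θ‖ ≤ 1 / 2 := fun θ => le_trans (hvb θ) hε2.le
  rw [circleIntegralConj, norm_mul, aux_norm_coeff]
  have hbnd : ‖∫ θ in (0:ℝ)..(2 * Real.pi),
      (starRingEnd ℂ) (deriv (circleMap 0 ε) θ) *
        ((-(n : ℂ) * (starRingEnd ℂ) (circleMap 0 ε θ) ^ (n - 1)) /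
          (circleMap 0 ε θ ^ m - (starRingEnd ℂ) (circleMap 0 ε θ) ^ n))‖ ≤
      (2 * n * ε) * |2 * Real.pi - 0| := by
    apply intervalIntegral.norm_integral_le_of_norm_le_const
    intro θ _
    rw [deriv_circleMap,
      aux_id2 (lt_trans hm hmn) (circleMap_ne_center hε.ne') (aux_denom hmn hε hε1 θ)]
    rw [norm_mul, norm_mul, norm_I, one_mul, Complex.norm_natCast]
    calc (n : ℝ) * ‖v θ / (1 - v θ)‖ ≤ (n : ℝ) * (2 * ‖v θ‖) :=
          mul_le_mul_of_nonneg_left (aux_bound (hvb' θ)) (Nat.cast_nonneg n)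
      _ ≤ (n : ℝ) * (2 * ε) := by
          have := hvb θ
          nlinarith [Nat.cast_nonneg (α := ℝ) n]
      _ = 2 * n * ε := by ring
  rw [sub_zero, abs_of_pos (by positivity : (0:ℝ) < 2 * Real.pi)] at hbnd
  calc 1 / (2 * Real.pi) * ‖∫ θ in (0:ℝ)..(2 * Real.pi),
        (starRingEnd ℂ) (deriv (circleMap 0 ε) θ) *
          ((-(n : ℂ) * (starRingEnd ℂ) (circleMap 0 ε θ) ^ (n - 1)) /
            (circleMap 0 ε θ ^ m - (starRingEnd ℂ) (circleMap 0 ε θ) ^ n))‖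
      ≤ 1 / (2 * Real.pi) * ((2 * n * ε) * (2 * Real.pi)) :=
        mul_le_mul_of_nonneg_left hbnd (by positivity)
    _ = 2 * n * ε := by field_simp

/-- For positive integers `m < n`, as `ε → 0⁺`,
`(1/(2πi)) ∮_{|z|=ε} (m z^{m-1})/(z^m - z̄^n) dz → m` and
`(1/(2πi)) ∮_{|z|=ε} (-n z̄^{n-1})/(z^m - z̄^n) dz̄ → 0`. -/
theorem stmt1 (m n : ℕ) (hm : 0 < m) (hmn : m < n) :
    Tendsto (fun ε : ℝ =>
        (1 / (2 * Real.pi * I)) *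
          ∮ z in C(0, ε), ((m : ℂ) * z ^ (m - 1)) / (z ^ m - (starRingEnd ℂ) z ^ n))
      (nhdsWithin 0 (Set.Ioi 0)) (nhds (m : ℂ)) ∧
    Tendsto (fun ε : ℝ =>
        (1 / (2 * Real.pi * I)) *
          circleIntegralConj
            (fun z => (-(n : ℂ) * (starRingEnd ℂ) z ^ (n - 1)) /
              (z ^ m - (starRingEnd ℂ) z ^ n)) 0 ε)
      (nhdsWithin 0 (Set.Ioi 0)) (nhds 0) := by
  have hmem : Set.Ioo (0:ℝ) (1/2) ∈ nhdsWithin (0:ℝ) (Set.Ioi 0) :=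
    Ioo_mem_nhdsGT_of_mem (by norm_num)
  constructor
  · rw [← tendsto_sub_nhds_zero_iff]
    apply squeeze_zero_norm' (a := fun ε : ℝ => 2 * m * ε)
    · filter_upwards [hmem] with ε hε
      exact est1 m n hm hmn hε.1 hε.2
    · have h : Tendsto (fun ε : ℝ => 2 * (m:ℝ) * ε) (nhds 0) (nhds (2 * m * 0)) :=
        tendsto_id.const_mul _
      rw [mul_zero] at h
      exact h.mono_left nhdsWithin_le_nhds
  · apply squeeze_zero_norm' (a := fun ε : ℝ => 2 * n * ε)
    · filter_upwards [hmem] with ε hε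
      exact est2 m n hm hmn hε.1 hε.2
    · have h : Tendsto (fun ε : ℝ => 2 * (n:ℝ) * ε) (nhds 0) (nhds (2 * n * 0)) :=
        tendsto_id.const_mul _
      rw [mul_zero] at h
      exact h.mono_left nhdsWithin_le_nhds
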